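/- arXiv:2302.01828 — 3 statements merged into one kernel-verified Lean document; each statement's English description precedes it below -/
import Mathlib

section
/- Let T be an in-order-labeled binary search tree on {1,...,n}, and let v_i, v_j be vertices labeled i and j with v_j in the left subtree of v_i. With Δ(k) = M(k, s_k) the standard modules over the path algebra A_n of 1 → ... → n, both Hom_{A_n}(Δ(i),Δ(j)) and Hom_{A_n}(Δ(j),Δ(i)) vanish. -/
/-- Binary trees with vertices labeled by natural numbers. -/
inductive LTree where
  | leaf : LTree
  | node : LTree → ℕ → LTree → LTree

namespace LTree

/-- The in-order traversal list of labels. -/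
def toList : LTree → List ℕ
  | leaf => []
  | node l k r => toList l ++ k :: toList r

/-- The binary search tree property. -/
def IsBST : LTree → Prop
  | leaf => True
  | node l k r => (∀ x ∈ toList l, x < k) ∧ (∀ x ∈ toList r, k < x) ∧ IsBST l ∧ IsBST r

/-- `Subtree s t` means `s` is the subtree of `t` rooted at some vertex of `t`. -/
inductive Subtree : LTree → LTree → Prop
  | refl (t : LTree) : Subtree t t
  | left {s l r : LTree} {k : ℕ} : Subtree s l → Subtree s (node l k r)
  | right {s l r : LTree} {k : ℕ} : Subtree s r → Subtree s (node l k r)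

/-- The label of the root. -/
def rootLabel : LTree → Option ℕ
  | leaf => none
  | node _ k _ => some k

/-- The maximal label in a tree (0 for the empty tree). -/
def sMax (t : LTree) : ℕ := t.toList.foldr max 0

/-- The minimal label in a nonempty tree. -/
def sMin (t : LTree) : ℕ := t.toList.foldr min (sMax t)

end LTree
/-- The support of the interval representation `M(i,j)` of the linear quiver
`1 → 2 → ⋯ → n`: the vertex space at `k` is `K` if `i ≤ k ≤ j` and `0` otherwise. -/
def supp (i j k : ℕ) : Prop := i ≤ k ∧ k ≤ j

/-- The scalar describing the arrow map `k → k+1` of `M(i,j)`: it is the identity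
(scalar `1`) when both endpoints lie in the support, and `0` otherwise. -/
def arrS (K : Type) [Field K] (i j k : ℕ) : K := if i ≤ k ∧ k + 1 ≤ j then 1 else 0

/-- The space of morphisms of representations `M(i₁,j₁) → M(i₂,j₂)`: since every
vertex space is `K` or `0`, a morphism is a family of scalars `c k`, vanishing
wherever source or target vanishes, and commuting with the arrow maps. -/
def HomSet (K : Type) [Field K] (i₁ j₁ i₂ j₂ : ℕ) : Submodule K (ℕ → K) where
  carrier := {c | (∀ k, ¬(supp i₁ j₁ k ∧ supp i₂ j₂ k) → c k = 0) ∧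
    ∀ k, arrS K i₂ j₂ k * c k = c (k + 1) * arrS K i₁ j₁ k}
  zero_mem' := ⟨fun _ _ => rfl, fun _ => by simp⟩
  add_mem' := by
    rintro a b ⟨ha1, ha2⟩ ⟨hb1, hb2⟩
    refine ⟨fun k hk => ?_, fun k => ?_⟩
    · show a k + b k = 0
      rw [ha1 k hk, hb1 k hk, add_zero]
    · show arrS K i₂ j₂ k * (a k + b k) = (a (k + 1) + b (k + 1)) * arrS K i₁ j₁ k
      rw [mul_add, add_mul, ha2 k, hb2 k]
  smul_mem' := by
    rintro t a ⟨ha1, ha2⟩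
    refine ⟨fun k hk => ?_, fun k => ?_⟩
    · show t * a k = 0
      rw [ha1 k hk, mul_zero]
    · show arrS K i₂ j₂ k * (t * a k) = t * a (k + 1) * arrS K i₁ j₁ k
      rw [mul_left_comm, ha2 k, ← mul_assoc]


lemma subtree_infix {s t : LTree} (h : LTree.Subtree s t) :
    s.toList <:+: t.toList := by
  induction h with
  | refl => exact List.infix_refl _
  | left h ih => exact ih.trans (List.prefix_append _ _).isInfix
  | right h ih =>
      exact ih.trans (((List.suffix_cons _ _).trans (List.suffix_append _ _)).isInfix)

lemma foldr_max_lt {L : List ℕ} {i : ℕ} (h0 : 0 < i) (h : ∀ x ∈ L, x < i) :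
    L.foldr max 0 < i := by
  induction L with
  | nil => exact h0
  | cons a L ih =>
      exact max_lt (h a List.mem_cons_self)
        (ih fun x hx => h x (List.mem_cons_of_mem _ hx))

lemma homset_bot (K : Type) [Field K] {i₁ j₁ i₂ j₂ : ℕ} (h : j₂ < i₁ ∨ j₁ < i₂) :
    HomSet K i₁ j₁ i₂ j₂ = ⊥ := by
  rw [eq_bot_iff]
  rintro c ⟨hc1, _⟩
  have : c = 0 := by
    funext k
    apply hc1
    rintro ⟨⟨h1, h2⟩, ⟨h3, h4⟩⟩
    unfold supp at *
    omega
  simp [this]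

/-- Let `T` be an in-order labeled binary search tree on `{1,…,n}`, with standard
modules `Δ(k) = M(k, s_k)` over the path algebra of `1 → ⋯ → n`.  If the vertex
labeled `j` lies in the left subtree of the vertex labeled `i`, then both
`Hom(Δ(i), Δ(j))` and `Hom(Δ(j), Δ(i))` vanish. -/
theorem stmt8 (K : Type) [Field K] (n : ℕ) (T l r sj : LTree) (i j : ℕ)
    (hT : T.toList = List.range' 1 n)
    (hsub : LTree.Subtree (.node l i r) T)
    (hsj : sj.Subtree l) (hj : sj.rootLabel = some j) :
    HomSet K i (LTree.sMax (LTree.node l i r)) j (LTree.sMax sj) = ⊥ ∧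
    HomSet K j (LTree.sMax sj) i (LTree.sMax (LTree.node l i r)) = ⊥ := by
  
  have hinf := subtree_infix hsub
  rw [hT] at hinf
  have hpw : (List.range' 1 n).Pairwise (· < ·) := by
    simpa using List.pairwise_lt_range' (s := 1) (n := n)
  have hpw2 : (LTree.node l i r).toList.Pairwise (· < ·) :=
    hpw.sublist hinf.sublist
  have hi1 : 1 ≤ i := by
    have : i ∈ List.range' 1 n := hinf.sublist.mem (by simp [LTree.toList])
    exact (List.mem_range'_1.mp this).1
  have hlt : ∀ x ∈ l.toList, x < i := by
    simp only [LTree.toList, List.pairwise_append] at hpw2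
    exact fun x hx => hpw2.2.2 x hx i List.mem_cons_self
  have hsjlt : LTree.sMax sj < i := by
    refine foldr_max_lt hi1 fun x hx => hlt x ?_
    exact (subtree_infix hsj).sublist.mem hx
  exact ⟨homset_bot K (Or.inl hsjlt), homset_bot K (Or.inr hsjlt)⟩
end

section
/- Let T be an in-order-labeled binary search tree on {1,...,n}. For each vertex v labeled i, set T(i) = M(t_i, s_i), where t_i and s_i are the minimal and maximal labels in the subtree of v. If v has left child labeled j, then T(j) is isomorphic to the quotient of T(i) by the image of the natural embedding Δ(i) = M(i, s_i) ↪ M(t_i, s_i); in particular there is a short exact sequence 0 → Δ(i) → T(i) → T(j) → 0 of representations of the quiver 1 → ... → n. -/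

lemma foldr_max_range' (a p : ℕ) : (List.range' a (p+1)).foldr max 0 = a + p := by
  induction p generalizing a with
  | zero => simp [List.range'_succ]
  | succ p ih => rw [List.range'_succ, List.foldr_cons, ih]; omega

lemma foldr_min_range' (a p c : ℕ) : (List.range' a (p+1)).foldr min c = min a c := by
  induction p generalizing a with
  | zero => simp [List.range'_succ]
  | succ p ih => rw [List.range'_succ, List.foldr_cons, ih]; omega

lemma infix_range' {L : List ℕ} {a n : ℕ} (h : L <:+: List.range' a n) :
    ∃ b, a ≤ b ∧ L = List.range' b L.length := by
  obtain ⟨u, v, huv⟩ := h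
  have hlen : u.length + (L.length + v.length) = n := by
    have := congrArg List.length huv; simpa [add_assoc] using this
  refine ⟨a + u.length, Nat.le_add_right _ _, ?_⟩
  have h1 : u ++ (L ++ v) = List.range' a u.length ++ List.range' (a + u.length) (L.length + v.length) := by
    rw [List.range'_append_1, show u.length + (L.length + v.length) = n from by omega]
    simpa using huv
  have h2 := (List.append_inj h1 (by simp)).2
  have h3 : L ++ v = List.range' (a + u.length) L.length ++ List.range' (a + u.length + L.length) v.length := by
    rw [List.range'_append_1]
    exact h2
  exact (List.append_inj h3 (by simp)).1

/-- Let `T` be an in-order labeled binary search tree on `{1,…,n}`.  For a vertex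
labeled `i`, set `T(i) = M(t_i, s_i)` (minimal and maximal labels of its subtree)
and `Δ(i) = M(i, s_i)`.  If the vertex labeled `i` has a left child labeled `j`,
then `t_j = t_i`, `s_j = i - 1`, and there is a short exact sequence
`0 → Δ(i) → T(i) → T(j) → 0`: since every vertex space of an interval
representation is `K` or `0`, this is expressed by a monomorphism `f` (nonzero
scalar on the support of `Δ(i)`), an epimorphism `g` (nonzero scalar on the
support of `T(j)`), with `g ∘ f = 0` and the support of `T(i)` covered by the
supports of `Δ(i)` and `T(j)`. -/
theorem stmt10 (K : Type) [Field K] (n : ℕ) (T l ll lr r : LTree) (i j : ℕ)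
    (hT : T.toList = List.range' 1 n)
    (hsub : LTree.Subtree (.node l i r) T) (hl : l = .node ll j lr) :
    LTree.sMin l = LTree.sMin (LTree.node l i r) ∧ LTree.sMax l = i - 1 ∧
    ∃ f g : ℕ → K,
      f ∈ HomSet K i (LTree.sMax (LTree.node l i r))
            (LTree.sMin (LTree.node l i r)) (LTree.sMax (LTree.node l i r)) ∧
      g ∈ HomSet K (LTree.sMin (LTree.node l i r)) (LTree.sMax (LTree.node l i r))
            (LTree.sMin l) (LTree.sMax l) ∧
      (∀ k, supp i (LTree.sMax (LTree.node l i r)) k → f k ≠ 0) ∧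
      (∀ k, supp (LTree.sMin l) (LTree.sMax l) k → g k ≠ 0) ∧
      (∀ k, g k * f k = 0) ∧
      (∀ k, supp (LTree.sMin (LTree.node l i r)) (LTree.sMax (LTree.node l i r)) k →
        supp i (LTree.sMax (LTree.node l i r)) k ∨ supp (LTree.sMin l) (LTree.sMax l) k) := by
  subst hl
  have hinf : (LTree.node (LTree.node ll j lr) i r).toList <:+: List.range' 1 n := by
    rw [← hT]; exact subtree_infix hsub
  obtain ⟨b, hab, hb⟩ := infix_range' hinf
  have hnode : (LTree.node (LTree.node ll j lr) i r).toList
      = (LTree.node ll j lr).toList ++ i :: r.toList := rfl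
  set A := (LTree.node ll j lr).toList with hA
  set B := r.toList with hB
  have hlenA : 1 ≤ A.length := by
    rw [hA]; simp [LTree.toList]; omega
  obtain ⟨p, hp⟩ : ∃ p, A.length = p + 1 := ⟨A.length - 1, by omega⟩
  set q := B.length with hq
  rw [hnode] at hb
  have hsplit : A ++ i :: B = List.range' b A.length ++ List.range' (b + A.length) (q + 1) := by
    rw [List.range'_append_1, show A.length + (q + 1) = (A ++ i :: B).length from by simp only [List.length_append, List.length_cons]; omega]
    exact hb
  have hA' : A = List.range' b A.length := (List.append_inj hsplit (by simp)).1
  have hiB : i :: B = List.range' (b + A.length) (q + 1) := (List.append_inj hsplit (by simp)).2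
  have hi : i = b + A.length := by
    rw [List.range'_succ] at hiB
    exact (List.cons_eq_cons.mp hiB).1
  have hTL : (LTree.node (LTree.node ll j lr) i r).toList = List.range' b ((p + 1 + q) + 1) := by
    rw [hnode, hA', hp,
      show i :: B = List.range' (b + (p + 1)) (q + 1) from by rw [← hp]; exact hiB,
      List.range'_append_1]
    congr 1
  have hsT : (LTree.node (LTree.node ll j lr) i r).sMax = b + (p + 1 + q) := by
    simp only [LTree.sMax]; rw [hTL, foldr_max_range']
  have htT : (LTree.node (LTree.node ll j lr) i r).sMin = b := by
    simp only [LTree.sMin, LTree.sMax]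
    rw [hTL, foldr_max_range', foldr_min_range']
    omega
  have hsl : (LTree.node ll j lr).sMax = b + p := by
    simp only [LTree.sMax]; rw [← hA, hA', hp, foldr_max_range']
  have htl : (LTree.node ll j lr).sMin = b := by
    simp only [LTree.sMin, LTree.sMax]
    rw [← hA, hA', hp, foldr_max_range', foldr_min_range']
    omega
  refine ⟨by rw [htl, htT], by rw [hsl]; omega, ?_⟩
  rw [htT, hsT, htl, hsl]
  clear_value A B q
  refine ⟨fun k => if i ≤ k ∧ k ≤ b + (p + 1 + q) then (1 : K) else 0,
    fun k => if b ≤ k ∧ k ≤ b + p then (1 : K) else 0, ⟨?_, ?_⟩, ⟨?_, ?_⟩, ?_, ?_, ?_, ?_⟩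
  · intro k hk
    simp only [supp] at hk
    show (if i ≤ k ∧ k ≤ b + (p + 1 + q) then (1 : K) else 0) = 0
    rw [if_neg]
    intro h
    exact hk ⟨h, by omega⟩
  · intro k
    simp only [arrS]
    split_ifs <;> first | ring1 | (exfalso; omega)
  · intro k hk
    simp only [supp] at hk
    show (if b ≤ k ∧ k ≤ b + p then (1 : K) else 0) = 0
    rw [if_neg]
    intro h
    exact hk ⟨⟨by omega, by omega⟩, h⟩
  · intro k
    simp only [arrS]
    split_ifs <;> first | ring1 | (exfalso; omega)
  · intro k hk
    simp only [supp] at hk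
    show (if i ≤ k ∧ k ≤ b + (p + 1 + q) then (1 : K) else 0) ≠ 0
    rw [if_pos hk]
    exact one_ne_zero
  · intro k hk
    simp only [supp] at hk
    show (if b ≤ k ∧ k ≤ b + p then (1 : K) else 0) ≠ 0
    rw [if_pos hk]
    exact one_ne_zero
  · intro k
    show (if b ≤ k ∧ k ≤ b + p then (1 : K) else 0) *
        (if i ≤ k ∧ k ≤ b + (p + 1 + q) then (1 : K) else 0) = 0
    split_ifs with h1 h2 <;> first | (exfalso; omega) | simp
  · intro k hk
    simp only [supp] at hk ⊢
    omega
end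

section
/- Let A be an associative unital algebra over a field K, and let X, Y be K-subspaces of A closed under multiplication, with dim(X ∩ Y) = 1, with chosen complements X′ of X∩Y in X and Y′ of X∩Y in Y satisfying X′·Y′ = Y′·X′ = 0, and with 1_A contained in the span of X ∪ Y. Then C = X′ ⊕ Y′ ⊕ (X ∩ Y) is a unital subalgebra of A. -/
/-- Gluing of subalgebras: let `A` be an associative unital `K`-algebra and
`X, Y ⊆ A` subspaces closed under multiplication with `dim (X ∩ Y) = 1`, with
chosen complements `X′` of `X ∩ Y` in `X` and `Y′` of `X ∩ Y` in `Y` such that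
`X′·Y′ = Y′·X′ = 0`, and with `1 ∈ span(X ∪ Y)`.  Then
`C = X′ ⊕ Y′ ⊕ (X ∩ Y)` is a unital subalgebra of `A`. -/
theorem stmt15 (K A : Type) [Field K] [Ring A] [Algebra K A]
    (X Y X' Y' : Submodule K A)
    (hXmul : ∀ a ∈ X, ∀ b ∈ X, a * b ∈ X)
    (hYmul : ∀ a ∈ Y, ∀ b ∈ Y, a * b ∈ Y)
    (hdim : Module.finrank K ↥(X ⊓ Y) = 1)
    (hX'c : X' ⊔ (X ⊓ Y) = X) (hX'd : X' ⊓ (X ⊓ Y) = ⊥)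
    (hY'c : Y' ⊔ (X ⊓ Y) = Y) (hY'd : Y' ⊓ (X ⊓ Y) = ⊥)
    (hzero : ∀ a ∈ X', ∀ b ∈ Y', a * b = 0 ∧ b * a = 0)
    (hone : (1 : A) ∈ X ⊔ Y) :
    ∃ S : Subalgebra K A,
      Subalgebra.toSubmodule S = X' ⊔ Y' ⊔ (X ⊓ Y) := by
  have hX'X : X' ≤ X := by
    have h := le_sup_left (a := X') (b := X ⊓ Y); rwa [hX'c] at h
  have hY'Y : Y' ≤ Y := by
    have h := le_sup_left (a := Y') (b := X ⊓ Y); rwa [hY'c] at h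
  have hXY : X ⊔ Y = X' ⊔ Y' ⊔ (X ⊓ Y) := by
    have hle1 : X ≤ X' ⊔ Y' ⊔ (X ⊓ Y) := by
      have h : X' ⊔ (X ⊓ Y) ≤ X' ⊔ Y' ⊔ (X ⊓ Y) :=
        sup_le (le_sup_of_le_left le_sup_left) le_sup_right
      rwa [hX'c] at h
    have hle2 : Y ≤ X' ⊔ Y' ⊔ (X ⊓ Y) := by
      have h : Y' ⊔ (X ⊓ Y) ≤ X' ⊔ Y' ⊔ (X ⊓ Y) :=
        sup_le (le_sup_of_le_left le_sup_right) le_sup_right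
      rwa [hY'c] at h
    refine le_antisymm (sup_le hle1 hle2) (sup_le (sup_le ?_ ?_) ?_)
    · exact hX'X.trans le_sup_left
    · exact hY'Y.trans le_sup_right
    · exact inf_le_left.trans le_sup_left
  have key : ∀ u ∈ X, ∀ v ∈ Y', u * v ∈ Y ∧ v * u ∈ Y := by
    intro u hu v hv
    rw [← hX'c] at hu
    obtain ⟨u', hu', w, hw, rfl⟩ := Submodule.mem_sup.mp hu
    obtain ⟨h1, h2⟩ := hzero u' hu' v hv
    constructor
    · have e : (u' + w) * v = w * v := by rw [add_mul, h1, zero_add]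
      rw [e]; exact hYmul w hw.2 v (hY'Y hv)
    · have e : v * (u' + w) = v * w := by rw [mul_add, h2, zero_add]
      rw [e]; exact hYmul v (hY'Y hv) w hw.2
  have hmul : ∀ a ∈ X ⊔ Y, ∀ b ∈ X ⊔ Y, a * b ∈ X ⊔ Y := by
    intro a ha b hb
    obtain ⟨xa, hxa, ya, hya, rfl⟩ := Submodule.mem_sup.mp ha
    obtain ⟨xb, hxb, yb, hyb, rfl⟩ := Submodule.mem_sup.mp hb
    rw [← hY'c] at hya hyb
    obtain ⟨ya', hya', za, hza, rfl⟩ := Submodule.mem_sup.mp hya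
    obtain ⟨yb', hyb', zb, hzb, rfl⟩ := Submodule.mem_sup.mp hyb
    have hxa' : xa + za ∈ X := X.add_mem hxa hza.1
    have hxb' : xb + zb ∈ X := X.add_mem hxb hzb.1
    have e : (xa + (ya' + za)) * (xb + (yb' + zb)) =
        (xa + za) * (xb + zb) + ((xa + za) * yb' + ya' * (xb + zb)) + ya' * yb' := by
      noncomm_ring
    rw [e]
    refine Submodule.add_mem _ (Submodule.add_mem _
      (Submodule.mem_sup_left (hXmul _ hxa' _ hxb'))
      (Submodule.add_mem _
        (Submodule.mem_sup_right (key _ hxa' _ hyb').1)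
        (Submodule.mem_sup_right (key _ hxb' _ hya').2)))
      (Submodule.mem_sup_right (hYmul _ (hY'Y hya') _ (hY'Y hyb')))
  refine ⟨(X ⊔ Y).toSubalgebra hone (fun x y hx hy => hmul x hx y hy), ?_⟩
  rw [Submodule.toSubalgebra_toSubmodule, hXY]
end
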